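/- If G is a minimally 2-connected graph of order n ≥ 4, then mvd(G) ≤ ⌊n/2⌋. -/

import Mathlib

open SimpleGraph

variable {V : Type*}

/-- `S` is a set of vertices (not containing `x` or `y`) whose removal separates `x` from `y`:
every walk from `x` to `y` meets `S`. -/
def IsSepSet (G : SimpleGraph V) (S : Set V) (x y : V) : Prop :=
  x ∉ S ∧ y ∉ S ∧ ∀ p : G.Walk x y, ∃ v ∈ p.support, v ∈ S

/-- `τ` is an MVD-coloring of `G`: every pair of distinct nonadjacent vertices is
separated by a monochromatic vertex cut. -/
def IsMVDColoring (G : SimpleGraph V) (τ : V → ℕ) : Prop :=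
  ∀ x y : V, x ≠ y → ¬ G.Adj x y →
    ∃ S : Set V, IsSepSet G S x y ∧ ∀ u ∈ S, ∀ w ∈ S, τ u = τ w

/-- The monochromatic vertex-disconnection number: the maximum number of colors
used by an MVD-coloring of `G`. -/
noncomputable def mvd (G : SimpleGraph V) : ℕ :=
  sSup {k | ∃ τ : V → ℕ, IsMVDColoring G τ ∧ (Set.range τ).ncard = k}

/-- `G` is 2-connected: it is connected, has at least three vertices, and removing
any single vertex leaves a connected graph. -/
def IsTwoConnected (G : SimpleGraph V) : Prop :=
  G.Connected ∧ (∀ v : V, (G.induce {u | u ≠ v}).Connected) ∧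
    ∃ x y z : V, x ≠ y ∧ x ≠ z ∧ y ≠ z

/-- `G` is minimally 2-connected: it is 2-connected but deleting any edge destroys
2-connectivity. -/
def MinimallyTwoConnected (G : SimpleGraph V) : Prop :=
  IsTwoConnected G ∧ ∀ e ∈ G.edgeSet, ¬ IsTwoConnected (G.deleteEdges {e})

/-! ### Auxiliary machinery -/

/-- There is a walk from `a` to `b` in `G` whose support lies in `s` and whose edges
avoid `E`. -/
def GW (G : SimpleGraph V) (s : Set V) (E : Set (Sym2 V)) (a b : V) : Prop :=
  ∃ p : G.Walk a b, (∀ u ∈ p.support, u ∈ s) ∧ ∀ e ∈ p.edges, e ∉ E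

namespace GW

variable {G : SimpleGraph V} {s : Set V} {E : Set (Sym2 V)}

lemma refl {a : V} (ha : a ∈ s) : GW G s E a a :=
  ⟨Walk.nil, by simpa using ha, by simp⟩

lemma symm {a b : V} : GW G s E a b → GW G s E b a := by
  rintro ⟨p, h1, h2⟩
  exact ⟨p.reverse, by simpa [Walk.support_reverse] using h1,
    by simpa [Walk.edges_reverse] using h2⟩

lemma trans {a b c : V} : GW G s E a b → GW G s E b c → GW G s E a c := by
  rintro ⟨p, h1, h2⟩ ⟨q, g1, g2⟩
  refine ⟨p.append q, ?_, ?_⟩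
  · intro u hu
    rcases (Walk.mem_support_append_iff _ _).1 hu with h | h
    exacts [h1 u h, g1 u h]
  · intro e he
    rw [Walk.edges_append, List.mem_append] at he
    rcases he with h | h
    exacts [h2 e h, g2 e h]

lemma cons {a b c : V} (h : G.Adj a b) (ha : a ∈ s) (he : s(a, b) ∉ E)
    (hg : GW G s E b c) : GW G s E a c := by
  obtain ⟨p, h1, h2⟩ := hg
  refine ⟨Walk.cons h p, ?_, ?_⟩
  · intro u hu
    rw [Walk.support_cons, List.mem_cons] at hu
    rcases hu with rfl | hu
    exacts [ha, h1 u hu]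
  · intro e hee
    rw [Walk.edges_cons, List.mem_cons] at hee
    rcases hee with rfl | hee
    exacts [he, h2 e hee]

lemma extend {a b c : V} (hg : GW G s E a b) (h : G.Adj b c) (hc : c ∈ s)
    (he : s(b, c) ∉ E) : GW G s E a c :=
  hg.trans (cons h (by obtain ⟨p, h1, _⟩ := hg; exact h1 b p.end_mem_support) he (refl hc))

lemma startMem {a b : V} (hg : GW G s E a b) : a ∈ s := by
  obtain ⟨p, h1, _⟩ := hg; exact h1 a p.start_mem_support

lemma endMem {a b : V} (hg : GW G s E a b) : b ∈ s := by
  obtain ⟨p, h1, _⟩ := hg; exact h1 b p.end_mem_support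

end GW

section Transfer

variable {G : SimpleGraph V} {s : Set V} {E : Set (Sym2 V)}

lemma gw_of_walk_induce_delete :
    ∀ {x y : ↥s} (_ : ((G.deleteEdges E).induce s).Walk x y), GW G s E x.1 y.1
  | x, _, Walk.nil => GW.refl x.2
  | x, y, @Walk.cons _ _ _ c _ h q => by
    have h' : G.Adj x.1 c.1 ∧ s(x.1, c.1) ∉ E := by simpa using h
    exact GW.cons h'.1 x.2 h'.2 (gw_of_walk_induce_delete q)

lemma reachable_induce_delete :
    ∀ {a b : V} (p : G.Walk a b), (∀ u ∈ p.support, u ∈ s) →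
    (∀ e ∈ p.edges, e ∉ E) → ∀ (ha : a ∈ s) (hb : b ∈ s),
    ((G.deleteEdges E).induce s).Reachable ⟨a, ha⟩ ⟨b, hb⟩
  | _, _, Walk.nil, _, _, _, _ => Reachable.refl _
  | a, b, Walk.cons h p, h1, h2, ha, hb => by
    have hc : _ ∈ s := h1 _ (by rw [Walk.support_cons]; exact List.mem_cons_of_mem _ p.start_mem_support)
    have hadj : ((G.deleteEdges E).induce s).Adj ⟨a, ha⟩ ⟨_, hc⟩ := by
      simp only [comap_adj, Function.Embedding.coe_subtype, deleteEdges_adj]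
      exact ⟨h, h2 _ (by rw [Walk.edges_cons]; exact List.mem_cons_self)⟩
    exact hadj.reachable.trans
      (reachable_induce_delete p
        (fun u hu => h1 u (by rw [Walk.support_cons]; exact List.mem_cons_of_mem _ hu))
        (fun e he => h2 e (by rw [Walk.edges_cons]; exact List.mem_cons_of_mem _ he)) hc hb)

lemma connected_induce_delete (hne : ∃ a, a ∈ s)
    (h : ∀ a ∈ s, ∀ b ∈ s, GW G s E a b) : ((G.deleteEdges E).induce s).Connected := by
  obtain ⟨a, ha⟩ := hne
  rw [connected_iff]
  refine ⟨fun x y => ?_, ⟨⟨a, ha⟩⟩⟩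
  obtain ⟨p, h1, h2⟩ := h x.1 x.2 y.1 y.2
  exact reachable_induce_delete p h1 h2 x.2 y.2

lemma gw_of_connected (h : ((G.deleteEdges E).induce s).Connected) {a b : V}
    (ha : a ∈ s) (hb : b ∈ s) : GW G s E a b := by
  obtain ⟨q⟩ := h.preconnected ⟨a, ha⟩ ⟨b, hb⟩
  exact gw_of_walk_induce_delete q

lemma gw_of_connected' (h : (G.induce s).Connected) {a b : V}
    (ha : a ∈ s) (hb : b ∈ s) : GW G s (∅ : Set (Sym2 V)) a b := by
  have h' : ((G.deleteEdges (∅ : Set (Sym2 V))).induce s).Connected := by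
    rwa [deleteEdges_empty]
  exact gw_of_connected h' ha hb

end Transfer

section Patch

variable {G : SimpleGraph V} {s : Set V} {E : Set (Sym2 V)}

/-- Propagate an invariant along a walk with support in `s` and edges avoiding `E`. -/
lemma gw_propagate {P : V → Prop}
    (hP : ∀ a b, P a → G.Adj a b → b ∈ s → s(a, b) ∉ E → P b) :
    ∀ {a b : V} (p : G.Walk a b), (∀ u ∈ p.support, u ∈ s) →
      (∀ e ∈ p.edges, e ∉ E) → P a → P b := by
  intro a b p
  induction p with
  | nil => exact fun _ _ h => h
  | @cons a c b h p ih =>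
    intro h1 h2 hPa
    have hcs : c ∈ s := h1 c (by rw [Walk.support_cons]; exact List.mem_cons_of_mem _ p.start_mem_support)
    have hce : s(a, c) ∉ E := h2 _ (by rw [Walk.edges_cons]; exact List.mem_cons_self)
    exact ih (fun u hu => h1 u (by rw [Walk.support_cons]; exact List.mem_cons_of_mem _ hu))
      (fun e he => h2 e (by rw [Walk.edges_cons]; exact List.mem_cons_of_mem _ he))
      (hP a c hPa h hcs hce)

/-- Replace uses of the edge `s(x,y)` in a walk by a detour avoiding that edge. -/
lemma gw_patch {x y : V} (hd : GW G s {s(x, y)} x y) :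
    ∀ {a b : V} (p : G.Walk a b), (∀ u ∈ p.support, u ∈ s) → GW G s {s(x, y)} a b := by
  intro a b p
  induction p with
  | nil => exact fun h1 => GW.refl (h1 _ (Walk.start_mem_support _))
  | @cons a c b h p ih =>
    intro h1
    have ha : a ∈ s := h1 a (Walk.start_mem_support _)
    have ihc := ih (fun u hu => h1 u (by rw [Walk.support_cons]; exact List.mem_cons_of_mem _ hu))
    by_cases he : s(a, c) = s(x, y)
    · rw [Sym2.eq_iff] at he
      rcases he with ⟨rfl, rfl⟩ | ⟨rfl, rfl⟩
      · exact hd.trans ihc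
      · exact hd.symm.trans ihc
    · exact GW.cons h ha (by simpa using he) ihc

end Patch

section Counting

open Classical in
lemma exists_avoid [Fintype V] (t : Finset V) (h : t.card < Fintype.card V) :
    ∃ z : V, z ∉ t := by
  by_contra hc
  push_neg at hc
  have hsub : Finset.univ ⊆ t := fun z _ => hc z
  have := Finset.card_le_card hsub
  rw [Finset.card_univ] at this
  omega

open Classical in
lemma exists_third [Fintype V] (hn : 3 ≤ Fintype.card V) (a b : V) :
    ∃ z : V, z ≠ a ∧ z ≠ b := by
  have h2 : ({a, b} : Finset V).card ≤ 2 := (Finset.card_insert_le _ _).trans (by simp)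
  obtain ⟨z, hz⟩ := exists_avoid ({a, b} : Finset V) (by omega)
  simp only [Finset.mem_insert, Finset.mem_singleton, not_or] at hz
  exact ⟨z, hz.1, hz.2⟩

open Classical in
lemma exists_fourth [Fintype V] (hn : 4 ≤ Fintype.card V) (a b c : V) :
    ∃ z : V, z ≠ a ∧ z ≠ b ∧ z ≠ c := by
  have h2 : ({b, c} : Finset V).card ≤ 2 := (Finset.card_insert_le _ _).trans (by simp)
  have h3 : ({a, b, c} : Finset V).card ≤ 3 := (Finset.card_insert_le _ _).trans (by omega)
  obtain ⟨z, hz⟩ := exists_avoid ({a, b, c} : Finset V) (by omega)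
  simp only [Finset.mem_insert, Finset.mem_singleton, not_or] at hz
  exact ⟨z, hz.1, hz.2.1, hz.2.2⟩

end Counting

section Main

variable {G : SimpleGraph V}

lemma NR_of_bad {a b c : V} (Hc : (G.induce {u | u ≠ c}).Connected)
    (ha : a ≠ c) (hb : b ≠ c)
    (hBad : ¬ ((G.deleteEdges {s(a, b)}).induce {u | u ≠ c}).Connected) :
    ¬ GW G {u | u ≠ c} {s(a, b)} a b := by
  intro hgw
  apply hBad
  refine connected_induce_delete ⟨a, ha⟩ ?_
  intro p hp q hq
  obtain ⟨w, h1, -⟩ := gw_of_connected' Hc hp hq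
  exact gw_patch hgw w h1

lemma bad_of_min [Fintype V] (hn : 4 ≤ Fintype.card V) (h : MinimallyTwoConnected G)
    {a b c : V} (hab : G.Adj a b) (hca : G.Adj c a) (hcb : G.Adj c b) :
    ¬ ((G.deleteEdges {s(a, b)}).induce {u | u ≠ c}).Connected := by
  intro hc
  apply h.2 s(a, b) (G.mem_edgeSet.2 hab)
  have hGconn := h.1.1
  have Hconn := h.1.2.1
  have hba : b ≠ a := hab.ne'
  have hac : a ≠ c := hca.ne'
  have hbc : b ≠ c := hcb.ne'
  have detour : ∀ (s : Set V), a ∈ s → b ∈ s → c ∈ s → GW G s {s(a, b)} a b := by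
    intro s has hbs hcs
    refine GW.cons hca.symm has ?_ (GW.cons hcb hcs ?_ (GW.refl hbs))
    · intro hmem
      rw [Set.mem_singleton_iff, Sym2.eq_iff] at hmem
      rcases hmem with ⟨-, h1⟩ | ⟨h1, -⟩
      · exact hbc h1.symm
      · exact hba h1.symm
    · intro hmem
      rw [Set.mem_singleton_iff, Sym2.eq_iff] at hmem
      rcases hmem with ⟨h1, -⟩ | ⟨-, h1⟩
      · exact hac h1.symm
      · exact hba h1
  refine ⟨?_, ?_, ?_⟩
  · rw [connected_iff]
    constructor
    · intro p q
      have hpq : GW G Set.univ (∅ : Set (Sym2 V)) p q := by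
        obtain ⟨w⟩ := hGconn.preconnected p q
        exact ⟨w, fun _ _ => trivial, by simp⟩
      obtain ⟨w0, -, -⟩ := hpq
      obtain ⟨w, -, h2⟩ :=
        gw_patch (detour Set.univ trivial trivial trivial) w0 (fun _ _ => trivial)
      exact (w.toDeleteEdges {s(a, b)} h2).reachable
    · exact Fintype.card_pos_iff.1 (by omega)
  · intro w
    by_cases hwc : w = c
    · subst hwc; exact hc
    by_cases hwa : w = a
    · rw [hwa]
      refine connected_induce_delete ⟨b, hba⟩ ?_
      intro p hp q hq
      obtain ⟨w0, h1, -⟩ := gw_of_connected' (Hconn a) hp hq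
      refine ⟨w0, h1, ?_⟩
      intro e he hee
      rw [Set.mem_singleton_iff] at hee
      subst hee
      exact (h1 a (w0.fst_mem_support_of_mem_edges he)) rfl
    by_cases hwb : w = b
    · rw [hwb]
      refine connected_induce_delete ⟨a, hab.ne⟩ ?_
      intro p hp q hq
      obtain ⟨w0, h1, -⟩ := gw_of_connected' (Hconn b) hp hq
      refine ⟨w0, h1, ?_⟩
      intro e he hee
      rw [Set.mem_singleton_iff] at hee
      subst hee
      exact (h1 b (w0.snd_mem_support_of_mem_edges he)) rfl
    · refine connected_induce_delete ⟨a, Ne.symm hwa⟩ ?_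
      intro p hp q hq
      obtain ⟨w0, h1, -⟩ := gw_of_connected' (Hconn w) hp hq
      exact gw_patch (detour {u | u ≠ w} (Ne.symm hwa) (Ne.symm hwb) (Ne.symm hwc)) w0 h1
  · obtain ⟨z, hz1, hz2⟩ := exists_third (by omega) a b
    exact ⟨a, b, z, hab.ne, Ne.symm hz1, Ne.symm hz2⟩

lemma N_subset (Hconn : ∀ w : V, (G.induce {u | u ≠ w}).Connected)
    {x v y : V} (hxv : G.Adj x v) (hvy : G.Adj v y) (hxy : G.Adj x y)
    (NR1 : ¬ GW G {u | u ≠ v} {s(x, y)} x y)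
    (NR2 : ¬ GW G {u | u ≠ x} {s(v, y)} v y) :
    ∀ c, G.Adj y c → c = x ∨ c = v := by
  intro c hyc
  by_contra hcon
  push_neg at hcon
  obtain ⟨hcx, hcv⟩ := hcon
  have hxvne : x ≠ v := hxv.ne
  have hvyne : v ≠ y := hvy.ne
  have hxyne : x ≠ y := hxy.ne
  have hRDc : GW G {u | u ≠ x} {s(v, y)} y c := by
    refine GW.cons hyc (Ne.symm hxyne) ?_ (GW.refl hcx)
    intro hmem
    rw [Set.mem_singleton_iff, Sym2.eq_iff] at hmem
    rcases hmem with ⟨h1, -⟩ | ⟨-, h2⟩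
    · exact hvyne h1.symm
    · exact hcv h2
  have hDB : ∀ u, GW G {u' | u' ≠ x} {s(v, y)} y u →
      GW G {u' | u' ≠ x} {s(v, y)} y u ∧ GW G {u' | u' ≠ v} {s(x, y)} y u := by
    intro u hu
    obtain ⟨p, h1, h2⟩ := hu
    refine gw_propagate
      (P := fun w => GW G {u' | u' ≠ x} {s(v, y)} y w ∧ GW G {u' | u' ≠ v} {s(x, y)} y w)
      ?_ p h1 h2 ⟨GW.refl (Ne.symm hxyne), GW.refl (Ne.symm hvyne)⟩
    rintro a b ⟨hRDa, hRBa⟩ hab hbs hbe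
    have hRDb : GW G {u' | u' ≠ x} {s(v, y)} y b := hRDa.extend hab hbs hbe
    have hbv : b ≠ v := by
      rintro rfl
      exact NR2 hRDb.symm
    refine ⟨hRDb, hRBa.extend hab hbv ?_⟩
    intro hmem
    rw [Set.mem_singleton_iff, Sym2.eq_iff] at hmem
    rcases hmem with ⟨h1, -⟩ | ⟨-, h2⟩
    · exact (hRDa.endMem) h1
    · exact hbs h2
  have hcy : c ≠ y := hyc.ne'
  obtain ⟨p, h1, h2⟩ := gw_of_connected' (Hconn y) hcy hvyne
  have hPv : GW G {u' | u' ≠ x} {s(v, y)} y v ∧ v ≠ y := by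
    refine gw_propagate
      (P := fun w => GW G {u' | u' ≠ x} {s(v, y)} y w ∧ w ≠ y)
      ?_ p h1 h2 ⟨hRDc, hcy⟩
    rintro a b ⟨hRDa, hay⟩ hab hbs -
    by_cases hbx : b = x
    · exfalso
      rw [hbx] at hab
      have hav : a ≠ v := (hDB a hRDa).2.endMem
      have hRAa : GW G {u' | u' ≠ v} {s(x, y)} x a := by
        refine GW.cons hab.symm hxvne ?_ (GW.refl hav)
        intro hmem
        rw [Set.mem_singleton_iff, Sym2.eq_iff] at hmem
        rcases hmem with ⟨-, h1⟩ | ⟨h1, -⟩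
        · exact hay h1
        · exact hxyne h1
      exact NR1 (hRAa.trans (hDB a hRDa).2.symm)
    · have hbe' : s(a, b) ∉ ({s(v, y)} : Set (Sym2 V)) := by
        intro hmem
        rw [Set.mem_singleton_iff, Sym2.eq_iff] at hmem
        rcases hmem with ⟨-, h2⟩ | ⟨h1, -⟩
        · exact hbs h2
        · exact hay h1
      exact ⟨hRDa.extend hab hbx hbe', hbs⟩
  exact NR2 hPv.1.symm

lemma no_triangle [Fintype V] (hn : 4 ≤ Fintype.card V) (h : MinimallyTwoConnected G)
    {x v y : V} (hxv : G.Adj x v) (hvy : G.Adj v y) (hxy : G.Adj x y) : False := by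
  have Hconn := h.1.2.1
  have Bxy := bad_of_min hn h hxy hxv.symm hvy
  have Bvy := bad_of_min hn h hvy hxv hxy
  have Bxv := bad_of_min hn h hxv hxy.symm hvy.symm
  have NR1 : ¬ GW G {u | u ≠ v} {s(x, y)} x y := NR_of_bad (Hconn v) hxv.ne hvy.ne' Bxy
  have NR2 : ¬ GW G {u | u ≠ x} {s(v, y)} v y := NR_of_bad (Hconn x) hxv.ne' hxy.ne' Bvy
  have NR1' : ¬ GW G {u | u ≠ v} {s(y, x)} y x := by
    rw [show s(y, x) = s(x, y) from Sym2.eq_swap]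
    exact fun hg => NR1 hg.symm
  have NR2'0 : ¬ GW G {u | u ≠ y} {s(x, v)} x v := NR_of_bad (Hconn y) hxy.ne hvy.ne Bxv
  have NR2' : ¬ GW G {u | u ≠ y} {s(v, x)} v x := by
    rw [show s(v, x) = s(x, v) from Sym2.eq_swap]
    exact fun hg => NR2'0 hg.symm
  have Ny := N_subset Hconn hxv hvy hxy NR1 NR2
  have Nx := N_subset Hconn hvy.symm hxv.symm hxy.symm NR1' NR2'
  obtain ⟨z, hzx, hzy, hzv⟩ := exists_fourth hn x y v
  obtain ⟨p, h1, h2⟩ := gw_of_connected' (Hconn v) (show x ∈ {u | u ≠ v} from hxv.ne) hzv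
  have hz : z = x ∨ z = y := by
    refine gw_propagate (P := fun w => w = x ∨ w = y) ?_ p h1 h2 (Or.inl rfl)
    rintro a b (rfl | rfl) hab hbs -
    · rcases Nx b hab with h | h
      · exact Or.inr h
      · exact absurd h hbs
    · rcases Ny b hab with h | h
      · exact Or.inl h
      · exact absurd h hbs
  rcases hz with rfl | rfl
  · exact hzx rfl
  · exact hzy rfl

lemma exists_nonadj [Fintype V] (hn : 4 ≤ Fintype.card V) (h : MinimallyTwoConnected G)
    (v : V) : ∃ x y, G.Adj v x ∧ G.Adj v y ∧ x ≠ y ∧ ¬ G.Adj x y := by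
  have Hconn := h.1.2.1
  obtain ⟨u, hu, -⟩ := exists_third (by omega) v v
  have hx : ∃ x, G.Adj v x := by
    by_contra hno
    push_neg at hno
    obtain ⟨p⟩ := h.1.1.preconnected v u
    cases p with
    | nil => exact hu rfl
    | cons hadj _ => exact hno _ hadj
  obtain ⟨x, hvx⟩ := hx
  have hy : ∃ y, G.Adj v y ∧ y ≠ x := by
    by_contra hno
    push_neg at hno
    obtain ⟨z, hzv, hzx⟩ := exists_third (by omega) v x
    obtain ⟨p, h1, -⟩ := gw_of_connected' (Hconn x) (show v ∈ {u' | u' ≠ x} from hvx.ne) hzx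
    cases p with
    | nil => exact hzv rfl
    | @cons _ c _ hadj q =>
      have hcx : c ≠ x :=
        h1 c (by rw [Walk.support_cons]; exact List.mem_cons_of_mem _ q.start_mem_support)
      exact hcx (hno c hadj)
  obtain ⟨y, hvy, hyx⟩ := hy
  exact ⟨x, y, hvx, hvy, Ne.symm hyx, fun hxy => no_triangle hn h hvx.symm hvy hxy⟩

lemma fiber_two [Fintype V] (hn : 4 ≤ Fintype.card V) (h : MinimallyTwoConnected G)
    {τ : V → ℕ} (hτ : IsMVDColoring G τ) (v : V) : ∃ u, u ≠ v ∧ τ u = τ v := by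
  obtain ⟨x, y, hvx, hvy, hne, hnadj⟩ := exists_nonadj hn h v
  obtain ⟨S, ⟨hxS, hyS, hsep⟩, hmono⟩ := hτ x y hne hnadj
  have hvS : v ∈ S := by
    obtain ⟨w, hw, hwS⟩ := hsep (Walk.cons hvx.symm (Walk.cons hvy Walk.nil))
    simp only [Walk.support_cons, Walk.support_nil, List.mem_cons, List.mem_singleton] at hw
    rcases hw with rfl | rfl | rfl | hw
    · exact absurd hwS hxS
    · exact hwS
    · exact absurd hwS hyS
    · exact absurd hw List.not_mem_nil
  have hx2 : ∃ u ∈ S, u ≠ v := by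
    by_contra hc
    push_neg at hc
    obtain ⟨p, h1, -⟩ := gw_of_connected' (h.1.2.1 v)
      (show x ∈ {u' | u' ≠ v} from hvx.ne') (show y ∈ {u' | u' ≠ v} from hvy.ne')
    obtain ⟨w, hw, hwS⟩ := hsep p
    exact (h1 w hw) (hc w hwS)
  obtain ⟨u, huS, huv⟩ := hx2
  exact ⟨u, huv, hmono u huS v hvS⟩

end Main

theorem mvd_minimally_two_connected [Fintype V] (G : SimpleGraph V)
    (hn : 4 ≤ Fintype.card V) (h : MinimallyTwoConnected G) :
    mvd G ≤ Fintype.card V / 2 := by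
  classical
  apply csSup_le'
  rintro k ⟨τ, hτ, rfl⟩
  have key : ∀ v : V, ∃ u, u ≠ v ∧ τ u = τ v := fun v => fiber_two hn h hτ v
  set R : Finset ℕ := Finset.image τ Finset.univ with hRdef
  have hR : (Set.range τ).ncard = R.card := by
    rw [← Set.ncard_coe_finset]
    congr 1
    rw [hRdef, Finset.coe_image, Finset.coe_univ, Set.image_univ]
  rw [hR, Nat.le_div_iff_mul_le (by norm_num : 0 < 2)]
  have hcard : Fintype.card V = ∑ c ∈ R, (Finset.univ.filter (fun w => τ w = c)).card := by
    rw [← Finset.card_univ]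
    exact Finset.card_eq_sum_card_fiberwise
      (fun w _ => Finset.mem_image_of_mem τ (Finset.mem_univ w))
  have hfib : ∀ c ∈ R, 2 ≤ (Finset.univ.filter (fun w => τ w = c)).card := by
    intro c hc
    obtain ⟨w, -, rfl⟩ := Finset.mem_image.1 hc
    obtain ⟨u, hne, heq⟩ := key w
    refine Finset.one_lt_card.2 ⟨u, ?_, w, ?_, hne⟩
    · simp [heq]
    · simp
  calc R.card * 2 = ∑ _c ∈ R, 2 := by rw [Finset.sum_const, smul_eq_mul, mul_comm]
    _ ≤ ∑ c ∈ R, (Finset.univ.filter (fun w => τ w = c)).card := Finset.sum_le_sum hfib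
    _ = Fintype.card V := hcard.symm
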